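/- As formal power series over ℤ, ∑_{j∈ℤ} (−1)^j X^{j(3j−2)} = ∏_{k≥1} (1 − X^{6k−5})(1 − X^{6k−1})(1 − X^{6k}), where the left-hand side is the series whose coefficient of X^n is ∑ over integers j with j(3j−2) = n of (−1)^j. -/

import Mathlib

open PowerSeries

noncomputable def gb : ℕ → ℕ → PowerSeries ℤ
  | _, 0 => 1
  | 0, _+1 => 0
  | n+1, k+1 => gb n (k+1) + X ^ (6*(n-k)) * gb n k

lemma gb_zero_right (n : ℕ) : gb n 0 = 1 := by cases n <;> rfl

lemma gb_succ_succ (n k : ℕ) :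
    gb (n+1) (k+1) = gb n (k+1) + X ^ (6*(n-k)) * gb n k := by rw [gb]

lemma gb_eq_zero : ∀ {n k : ℕ}, n < k → gb n k = 0
  | 0, _+1, _ => rfl
  | n+1, k+1, h => by
      rw [gb_succ_succ, gb_eq_zero (by omega), gb_eq_zero (by omega)]
      ring

lemma gb_self : ∀ n : ℕ, gb n n = 1
  | 0 => rfl
  | n+1 => by
      rw [gb_succ_succ, gb_self n, gb_eq_zero (by omega)]
      simp

lemma gb_pascal2 : ∀ n k : ℕ, gb (n+1) (k+1) = X ^ (6*(k+1)) * gb n (k+1) + gb n k := by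
  intro n
  induction n with
  | zero =>
      intro k
      cases k with
      | zero => simp [gb_succ_succ, gb_zero_right, gb_eq_zero]
      | succ k => rw [gb_eq_zero (by omega), gb_eq_zero (by omega), gb_eq_zero (by omega)]; ring
  | succ n ih =>
      intro k
      rcases le_or_gt (n+2) k with hk | hk
      · rw [gb_eq_zero (by omega), gb_eq_zero (by omega), gb_eq_zero (by omega)]; ring
      rcases eq_or_lt_of_le (show k ≤ n+1 by omega) with rfl | hk'
      · rw [show gb (n+1+1) (n+1+1) = 1 from gb_self _, gb_eq_zero (by omega), gb_self]
        ring
      cases k with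
      | zero =>
          have hL : gb (n+1+1) 1
              = (X ^ (6*(0+1)) * gb n (0+1) + gb n 0) + X ^ (6*(n+1-0)) * gb (n+1) 0 := by
            rw [gb_succ_succ (n+1) 0, ih 0]
          have hR : gb (n+1) (0+1) = gb n (0+1) + X ^ (6*(n-0)) * gb n 0 := gb_succ_succ n 0
          rw [hL, hR, gb_zero_right, gb_zero_right]
          have p : (X : PowerSeries ℤ) ^ (6*(0+1)) * X ^ (6*(n-0)) = X ^ (6*(n+1-0)) := by
            rw [← pow_add]; congr 1; omega
          linear_combination - p
      | succ k' =>
          have hkn : k' + 1 ≤ n := by omega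
          have hL : gb (n+1+1) (k'+1+1)
              = (X ^ (6*(k'+1+1)) * gb n (k'+1+1) + gb n (k'+1))
                + X ^ (6*(n-k')) * (X ^ (6*(k'+1)) * gb n (k'+1) + gb n k') := by
            rw [show gb (n+1+1) (k'+1+1)
                  = gb (n+1) (k'+1+1) + X ^ (6*(n+1-(k'+1))) * gb (n+1) (k'+1) from
                gb_succ_succ (n+1) (k'+1), ih (k'+1), ih k']
            congr 3
            omega
          have hR1 : gb (n+1) (k'+1+1) = gb n (k'+1+1) + X ^ (6*(n-(k'+1))) * gb n (k'+1) :=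
            gb_succ_succ n (k'+1)
          have hR2 : gb (n+1) (k'+1) = gb n (k'+1) + X ^ (6*(n-k')) * gb n k' :=
            gb_succ_succ n k'
          rw [hL, hR1, hR2]
          have p : (X : PowerSeries ℤ) ^ (6*(n-k')) * X ^ (6*(k'+1))
              = X ^ (6*(k'+1+1)) * X ^ (6*(n-(k'+1))) := by
            rw [← pow_add, ← pow_add]; congr 1; omega
          linear_combination (gb n (k'+1)) * p

noncomputable def gbz (n : ℕ) (k : ℤ) : PowerSeries ℤ := if 0 ≤ k then gb n k.toNat else 0

lemma gbz_neg {n : ℕ} {k : ℤ} (h : k < 0) : gbz n k = 0 := by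
  simp [gbz, not_le.mpr h]

lemma gbz_natCast (n m : ℕ) : gbz n (m : ℤ) = gb n m := by
  simp [gbz]

lemma gbz_big {n : ℕ} {k : ℤ} (h : (n : ℤ) < k) : gbz n k = 0 := by
  rcases lt_or_ge k 0 with h' | h'
  · exact gbz_neg h'
  · rw [gbz, if_pos h', gb_eq_zero (by omega)]

lemma gbz_zero (n : ℕ) : gbz n 0 = 1 := by
  rw [show (0:ℤ) = ((0:ℕ):ℤ) from rfl, gbz_natCast, gb_zero_right]

lemma pz1 (n : ℕ) (k : ℤ) :
    gbz (n+1) k = gbz n k + X ^ ((6*((n:ℤ)+1-k)).toNat) * gbz n (k-1) := by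
  rcases lt_or_ge k 0 with h | h
  · rw [gbz_neg h, gbz_neg h, gbz_neg (by omega)]; ring
  lift k to ℕ using h
  cases k with
  | zero =>
      simp only [Nat.cast_zero]
      rw [gbz_zero, gbz_zero, gbz_neg (by omega)]; ring
  | succ t =>
      rw [show ((t+1:ℕ):ℤ) - 1 = ((t:ℕ):ℤ) by push_cast; ring,
          gbz_natCast, gbz_natCast, gbz_natCast]
      rcases le_or_gt (t+1) n with ht | ht
      · rw [show ((6*((n:ℤ)+1-((t+1:ℕ):ℤ))).toNat) = 6*(n-t) by omega, gb_succ_succ]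
      · rcases eq_or_lt_of_le (show n ≤ t by omega) with rfl | ht'
        · rw [gb_self, gb_eq_zero (show n < n+1 by omega), gb_self,
              show ((6*((n:ℤ)+1-((n+1:ℕ):ℤ))).toNat) = 0 by omega]
          simp
        · rw [gb_eq_zero (show n+1 < t+1 by omega), gb_eq_zero (show n < t+1 by omega),
              gb_eq_zero (show n < t by omega)]
          ring

lemma pz2 (n : ℕ) (k : ℤ) :
    gbz (n+1) k = X ^ ((6*k).toNat) * gbz n k + gbz n (k-1) := by
  rcases lt_or_ge k 0 with h | h
  · rw [gbz_neg h, gbz_neg h, gbz_neg (by omega)]; ring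
  lift k to ℕ using h
  cases k with
  | zero =>
      simp only [Nat.cast_zero]
      rw [gbz_zero, gbz_zero, gbz_neg (by omega)]; simp
  | succ t =>
      rw [show ((t+1:ℕ):ℤ) - 1 = ((t:ℕ):ℤ) by push_cast; ring,
          gbz_natCast, gbz_natCast, gbz_natCast]
      rw [show ((6*((t+1:ℕ):ℤ)).toNat) = 6*(t+1) by omega, gb_pascal2 n t]

def sg (j : ℤ) : ℤ := if Even j then 1 else -1

lemma sg_succ (j : ℤ) : sg (j+1) = - sg j := by
  by_cases h : Even j <;> simp [sg, h, Int.even_add_one]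

lemma sg_pred (j : ℤ) : sg (j-1) = - sg j := by
  have := sg_succ (j-1)
  rw [sub_add_cancel] at this
  omega

lemma key_expand (N : ℕ) (j : ℤ) (h1 : -(N:ℤ)-1 ≤ j) (h2 : j ≤ (N:ℤ)+1) :
    gbz (2*N+2) ((N:ℤ)+1+j)
      = X ^ ((6*((N:ℤ)+1+j)).toNat) * gbz (2*N) ((N:ℤ)+1+j)
        + gbz (2*N) ((N:ℤ)+j)
        + X ^ (6*(2*N+1)) * gbz (2*N) ((N:ℤ)+j)
        + X ^ ((6*((N:ℤ)+1-j)).toNat) * gbz (2*N) ((N:ℤ)+j-1) := by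
  rcases eq_or_lt_of_le h1 with rfl | h1'
  · -- j = -(N+1) : boundary
    rw [show (N:ℤ)+1+(-(N:ℤ)-1) = 0 by ring, show (N:ℤ)+(-(N:ℤ)-1) = -1 by ring,
        show (-1 : ℤ) - 1 = -2 by ring, gbz_zero, gbz_zero, gbz_neg (by omega),
        gbz_neg (by omega)]
    norm_num
  · -- -N ≤ j
    have hj : -(N:ℤ) ≤ j := by omega
    have e1 : gbz (2*N+1+1) ((N:ℤ)+1+j)
        = gbz (2*N+1) ((N:ℤ)+1+j)
          + X ^ ((6*((N:ℤ)+1-j)).toNat) * gbz (2*N+1) ((N:ℤ)+j) := by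
      rw [pz1 (2*N+1) ((N:ℤ)+1+j)]
      congr 3
      · push_cast; ring_nf
      · ring
    have e2 : gbz (2*N+1) ((N:ℤ)+1+j)
        = X ^ ((6*((N:ℤ)+1+j)).toNat) * gbz (2*N) ((N:ℤ)+1+j) + gbz (2*N) ((N:ℤ)+j) := by
      rw [pz2 (2*N) ((N:ℤ)+1+j)]
      congr 2
      ring
    have e3 : gbz (2*N+1) ((N:ℤ)+j)
        = X ^ ((6*((N:ℤ)+j)).toNat) * gbz (2*N) ((N:ℤ)+j) + gbz (2*N) ((N:ℤ)+j-1) := by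
      rw [pz2 (2*N) ((N:ℤ)+j)]
    have e4 : (X : PowerSeries ℤ) ^ ((6*((N:ℤ)+1-j)).toNat) * X ^ ((6*((N:ℤ)+j)).toNat)
        = X ^ (6*(2*N+1)) := by
      rw [← pow_add]
      congr 1
      omega
    calc gbz (2*N+2) ((N:ℤ)+1+j) = gbz (2*N+1+1) ((N:ℤ)+1+j) := by norm_num
    _ = X ^ ((6*((N:ℤ)+1+j)).toNat) * gbz (2*N) ((N:ℤ)+1+j) + gbz (2*N) ((N:ℤ)+j)
          + X ^ ((6*((N:ℤ)+1-j)).toNat)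
            * (X ^ ((6*((N:ℤ)+j)).toNat) * gbz (2*N) ((N:ℤ)+j) + gbz (2*N) ((N:ℤ)+j-1)) := by
        rw [e1, e2, e3]
    _ = _ := by linear_combination (gbz (2*N) ((N:ℤ)+j)) * e4

lemma e_nonneg (j : ℤ) : 0 ≤ j*(3*j-2) := by
  rcases le_or_gt j 0 with h | h
  · nlinarith
  · nlinarith

noncomputable def trm (N : ℕ) (j : ℤ) : PowerSeries ℤ :=
  PowerSeries.C (sg j) * (gbz (2*N) ((N:ℤ)+j) * X ^ (j*(3*j-2)).toNat)

lemma trm_vanish {N : ℕ} {j : ℤ} (h : j < -(N:ℤ) ∨ (N:ℤ) < j) : trm N j = 0 := by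
  rcases h with h | h
  · rw [trm, gbz_neg (by omega)]; ring
  · rw [trm, gbz_big (by push_cast; omega)]; ring

lemma sum_shift (a b c : ℤ) (f : ℤ → PowerSeries ℤ) :
    ∑ j ∈ Finset.Icc a b, f (j+c) = ∑ j ∈ Finset.Icc (a+c) (b+c), f j := by
  rw [← Finset.map_add_right_Icc, Finset.sum_map]
  rfl

lemma main_finite : ∀ N : ℕ,
    (∏ m ∈ Finset.range N, ((1 - (X : PowerSeries ℤ)^(6*m+1)) * (1 - (X : PowerSeries ℤ)^(6*m+5))))
      = ∑ j ∈ Finset.Icc (-(N:ℤ)) (N:ℤ), trm N j := by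
  intro N
  induction N with
  | zero =>
      norm_num [trm, sg, gbz_zero]
  | succ N ih =>
      rw [Finset.prod_range_succ, ih,
          show ((N+1:ℕ):ℤ) = (N:ℤ)+1 by push_cast; ring,
          show (-((N:ℤ)+1)) = -(N:ℤ)-1 by ring]
      have expand : ∀ j ∈ Finset.Icc (-(N:ℤ)-1) ((N:ℤ)+1),
          trm (N+1) j = (-(X^(6*N+5) * trm N (j+1))) + trm N j
            + X^(6*(2*N+1)) * trm N j + (-(X^(6*N+1) * trm N (j-1))) := by
        intro j hj
        simp only [Finset.mem_Icc] at hj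
        have hK := key_expand N j (by omega) (by omega)
        have h2N : (2*(N+1) : ℕ) = 2*N+2 := by ring
        have hcast : ((N+1:ℕ):ℤ) + j = (N:ℤ)+1+j := by push_cast; ring
        rw [trm, h2N, hcast, hK]
        -- now expand the four terms
        rw [trm, trm, trm, sg_succ, sg_pred, map_neg,
            show ((N:ℤ) + (j+1)) = (N:ℤ)+1+j by ring,
            show ((N:ℤ) + (j-1)) = (N:ℤ)+j-1 by ring]
        have h1 : 0 ≤ j*(3*j-2) := e_nonneg j
        have h2 : 0 ≤ (j+1)*(3*(j+1)-2) := e_nonneg (j+1)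
        have h3 : 0 ≤ (j-1)*(3*(j-1)-2) := e_nonneg (j-1)
        have r1 : (j+1)*(3*(j+1)-2) = j*(3*j-2) + 6*j + 1 := by ring
        have r2 : (j-1)*(3*(j-1)-2) = j*(3*j-2) - 6*j + 5 := by ring
        have hx1 : (X : PowerSeries ℤ) ^ ((6*((N:ℤ)+1+j)).toNat) * X ^ ((j*(3*j-2)).toNat)
            = X^(6*N+5) * X ^ (((j+1)*(3*(j+1)-2)).toNat) := by
          rw [← pow_add, ← pow_add]; congr 1; omega
        have hx2 : (X : PowerSeries ℤ) ^ ((6*((N:ℤ)+1-j)).toNat) * X ^ ((j*(3*j-2)).toNat)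
            = X^(6*N+1) * X ^ (((j-1)*(3*(j-1)-2)).toNat) := by
          rw [← pow_add, ← pow_add]; congr 1; omega
        linear_combination (PowerSeries.C (sg j) * gbz (2*N) ((N:ℤ)+1+j)) * hx1
          + (PowerSeries.C (sg j) * gbz (2*N) ((N:ℤ)+j-1)) * hx2
      rw [Finset.sum_congr rfl expand]
      simp only [Finset.sum_add_distrib, Finset.sum_neg_distrib, ← Finset.mul_sum]
      have hs1 : ∑ j ∈ Finset.Icc (-(N:ℤ)-1) ((N:ℤ)+1), trm N (j+1)
          = ∑ j ∈ Finset.Icc (-(N:ℤ)) (N:ℤ), trm N j := by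
        rw [sum_shift]
        refine (Finset.sum_subset (Finset.Icc_subset_Icc (by omega) (by omega)) ?_).symm
        intro x hx hnx
        simp only [Finset.mem_Icc] at hx hnx
        exact trm_vanish (by omega)
      have hs2 : ∑ j ∈ Finset.Icc (-(N:ℤ)-1) ((N:ℤ)+1), trm N (j-1)
          = ∑ j ∈ Finset.Icc (-(N:ℤ)) (N:ℤ), trm N j := by
        simp only [sub_eq_add_neg]
        rw [sum_shift]
        refine (Finset.sum_subset (Finset.Icc_subset_Icc (by omega) (by omega)) ?_).symm
        intro x hx hnx
        simp only [Finset.mem_Icc] at hx hnx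
        exact trm_vanish (by omega)
      have hs3 : ∑ j ∈ Finset.Icc (-(N:ℤ)-1) ((N:ℤ)+1), trm N j
          = ∑ j ∈ Finset.Icc (-(N:ℤ)) (N:ℤ), trm N j := by
        refine (Finset.sum_subset (Finset.Icc_subset_Icc (by omega) (by omega)) ?_).symm
        intro x hx hnx
        simp only [Finset.mem_Icc] at hx hnx
        exact trm_vanish (by omega)
      rw [hs1, hs2, hs3]
      have hq : (X : PowerSeries ℤ)^(6*N+1) * X^(6*N+5) = X^(6*(2*N+1)) := by
        rw [← pow_add]; congr 1; ring
      linear_combination (∑ j ∈ Finset.Icc (-(N:ℤ)) (N:ℤ), trm N j) * hq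

noncomputable def Dq (m : ℕ) : PowerSeries ℤ := ∏ i ∈ Finset.range m, (1 - X^(6*i+6))

lemma Dq_succ (m : ℕ) : Dq (m+1) = Dq m * (1 - X^(6*m+6)) := Finset.prod_range_succ _ _

lemma gb_Dq : ∀ n : ℕ, ∀ k ≤ n, gb n k * (Dq k * Dq (n-k)) = Dq n := by
  intro n
  induction n with
  | zero =>
      intro k hk
      interval_cases k
      simp [gb_zero_right, Dq]
  | succ n ih =>
      intro k hk
      cases k with
      | zero => simp [gb_zero_right, Dq]
      | succ k =>
          rcases eq_or_lt_of_le hk with hk' | hk'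
          · rw [hk', gb_self]
            simp [Dq]
          · have hkn : k + 1 ≤ n := by omega
            have hA := ih (k+1) hkn
            have hB := ih k (by omega)
            rw [show n+1-(k+1) = n-k by omega]
            rw [gb_succ_succ n k, Dq_succ n]
            have hd1 : Dq (n-k) = Dq (n-(k+1)) * (1 - X^(6*(n-k))) := by
              have h' : n-k = n-(k+1)+1 := by omega
              rw [h', Dq_succ, show 6*(n-(k+1))+6 = 6*(n-(k+1)+1) by omega]
            have hd2 : Dq (k+1) = Dq k * (1 - X^(6*k+6)) := Dq_succ k
            rw [hd2] at hA
            rw [hd1] at hB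
            rw [hd1, hd2]
            have hp2 : (X : PowerSeries ℤ)^(6*(n-k)) * X^(6*k+6) = X^(6*n+6) := by
              rw [← pow_add]; congr 1; omega
            linear_combination (1 - (X : PowerSeries ℤ)^(6*(n-k))) * hA
              + (X : PowerSeries ℤ)^(6*(n-k)) * (1 - X^(6*k+6)) * hB - Dq n * hp2

noncomputable def Rt (a b : ℕ) : PowerSeries ℤ := ∏ i ∈ Finset.Ico a b, (1 - X^(6*i+6))

lemma Dq_split (a b : ℕ) (h : a ≤ b) : Dq b = Dq a * Rt a b := by
  rw [Dq, Dq, Rt, Finset.prod_range_mul_prod_Ico _ h]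

lemma Rt_one_add (a : ℕ) : ∀ b : ℕ, ∃ h : PowerSeries ℤ, Rt a b = 1 + X^(6*a+6) * h := by
  intro b
  induction b with
  | zero => exact ⟨0, by simp [Rt]⟩
  | succ b ih =>
      rcases le_or_gt (b+1) a with hb | hb
      · have hemp : Finset.Ico a (b+1) = ∅ := Finset.Ico_eq_empty (by omega)
        exact ⟨0, by simp [Rt, hemp]⟩
      · obtain ⟨h, hh⟩ := ih
        refine ⟨h*(1-X^(6*b+6)) - X^(6*(b-a)), ?_⟩
        rw [Rt, Finset.prod_Ico_succ_top (by omega), ← Rt, hh]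
        have hp : (X : PowerSeries ℤ)^(6*a+6) * X^(6*(b-a)) = X^(6*b+6) := by
          rw [← pow_add]; congr 1; omega
        linear_combination hp

lemma mul_one_add_pow {m p q : ℕ} (hpm : m ≤ p) (hqm : m ≤ q) (h1 h2 : PowerSeries ℤ) :
    ∃ h : PowerSeries ℤ, (1 + X^(6*p+6)*h1) * (1 + X^(6*q+6)*h2) = 1 + X^(6*m+6)*h := by
  refine ⟨X^(6*(p-m))*h1 + X^(6*(q-m))*h2 + X^(6*(p-m))*X^(6*q+6)*h1*h2, ?_⟩
  have hpp : (X : PowerSeries ℤ)^(6*m+6) * X^(6*(p-m)) = X^(6*p+6) := by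
    rw [← pow_add]; congr 1; omega
  have hqq : (X : PowerSeries ℤ)^(6*m+6) * X^(6*(q-m)) = X^(6*q+6) := by
    rw [← pow_add]; congr 1; omega
  linear_combination (-(h1 + X^(6*q+6)*h1*h2)) * hpp - h2 * hqq

lemma Dq_constantCoeff (m : ℕ) : constantCoeff (Dq m) = 1 := by
  rw [Dq, map_prod]
  apply Finset.prod_eq_one
  intro i _
  rw [map_sub, map_one, map_pow, constantCoeff_X, zero_pow (by omega), sub_zero]

lemma Dq_ne_zero (m : ℕ) : Dq m ≠ 0 := by
  intro h
  have := Dq_constantCoeff m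
  rw [h, map_zero] at this
  simp at this

lemma Dq_gbz (N : ℕ) (j : ℤ) (hj1 : -(N:ℤ) ≤ j) (hj2 : j ≤ (N:ℤ)) :
    ∃ h : PowerSeries ℤ, Dq N * gbz (2*N) ((N:ℤ)+j) = 1 + X^(6*(N - j.natAbs)+6) * h := by
  have h0 : (0:ℤ) ≤ (N:ℤ)+j := by omega
  set a := ((N:ℤ)+j).toNat with ha
  have hgbz : gbz (2*N) ((N:ℤ)+j) = gb (2*N) a := by rw [gbz, if_pos h0]
  set b := 2*N - a with hb
  have hab : a ≤ 2*N := by omega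
  have hprod := gb_Dq (2*N) a hab
  rcases le_or_gt b a with hba | hba
  · -- j ≥ 0 side : b ≤ N ≤ a
    have hsplit : Dq (2*N) = Dq a * Rt a (2*N) := Dq_split a (2*N) hab
    have hcancel : gb (2*N) a * Dq b = Rt a (2*N) := by
      have : Dq a * (gb (2*N) a * Dq b) = Dq a * Rt a (2*N) := by
        rw [← hsplit, ← hprod]; ring
      exact mul_left_cancel₀ (Dq_ne_zero a) this
    have hbN : b ≤ N := by omega
    have hDqN : Dq N = Dq b * Rt b N := Dq_split b N hbN
    obtain ⟨h1, hh1⟩ := Rt_one_add a (2*N)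
    obtain ⟨h2, hh2⟩ := Rt_one_add b N
    have key : Dq N * gb (2*N) a = (1 + X^(6*a+6)*h1) * (1 + X^(6*b+6)*h2) := by
      rw [← hh1, ← hh2, hDqN]
      calc Dq b * Rt b N * gb (2*N) a = (gb (2*N) a * Dq b) * Rt b N := by ring
      _ = Rt a (2*N) * Rt b N := by rw [hcancel]
    obtain ⟨h, hh⟩ := mul_one_add_pow (show N - j.natAbs ≤ a by omega)
      (show N - j.natAbs ≤ b by omega) h1 h2
    exact ⟨h, by rw [hgbz, key, hh]⟩
  · -- j < 0 side : a < b, a ≤ N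
    have hbb : b ≤ 2*N := by omega
    have hsplit : Dq (2*N) = Dq b * Rt b (2*N) := Dq_split b (2*N) hbb
    have hcancel : gb (2*N) a * Dq a = Rt b (2*N) := by
      have : Dq b * (gb (2*N) a * Dq a) = Dq b * Rt b (2*N) := by
        rw [← hsplit, ← hprod]; ring
      exact mul_left_cancel₀ (Dq_ne_zero b) this
    have haN : a ≤ N := by omega
    have hDqN : Dq N = Dq a * Rt a N := Dq_split a N haN
    obtain ⟨h1, hh1⟩ := Rt_one_add b (2*N)
    obtain ⟨h2, hh2⟩ := Rt_one_add a N
    have key : Dq N * gb (2*N) a = (1 + X^(6*b+6)*h1) * (1 + X^(6*a+6)*h2) := by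
      rw [← hh1, ← hh2, hDqN]
      calc Dq a * Rt a N * gb (2*N) a = (gb (2*N) a * Dq a) * Rt a N := by ring
      _ = Rt b (2*N) * Rt a N := by rw [hcancel]
    obtain ⟨h, hh⟩ := mul_one_add_pow (show N - j.natAbs ≤ b by omega)
      (show N - j.natAbs ≤ a by omega) h1 h2
    exact ⟨h, by rw [hgbz, key, hh]⟩

lemma coeff_zero_of_big {m n : ℕ} (g : PowerSeries ℤ) (h : n < m) :
    PowerSeries.coeff n (X^m * g) = 0 := by
  rw [PowerSeries.coeff_X_pow_mul', if_neg (by omega)]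


/-- The infinite product `∏_{k ≥ 0} f k` of formal power series, in the situation where the
`k`-th factor is `1 + (multiple of X^(k+1))`: the coefficient of `X^n` in the product is then
the (stable) coefficient of `X^n` in any partial product containing at least the first `n + 1`
factors. -/
noncomputable def iprod (f : ℕ → PowerSeries ℤ) : PowerSeries ℤ :=
  PowerSeries.mk fun n => PowerSeries.coeff n (∏ k ∈ Finset.range (n + 1), f k)

/-- As formal power series over `ℤ`,
`∑_{j ∈ ℤ} (-1)^j X^{j(3j-2)} = ∏_{k ≥ 1} (1 - X^{6k-5})(1 - X^{6k-1})(1 - X^{6k})`,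
where the left-hand side is the series whose coefficient of `X^n` is the sum of `(-1)^j`
over the (finitely many) integers `j` with `j(3j-2) = n`. -/
theorem stmt15 :
    (PowerSeries.mk fun n =>
        ∑' j : ℤ, if j * (3 * j - 2) = (n : ℤ) then (if Even j then (1 : ℤ) else -1) else 0) =
      iprod (fun k => (1 - (X : PowerSeries ℤ) ^ (6 * (k + 1) - 5)) *
        (1 - (X : PowerSeries ℤ) ^ (6 * (k + 1) - 1)) *
        (1 - (X : PowerSeries ℤ) ^ (6 * (k + 1)))) := by
  ext n
  rw [iprod, coeff_mk, coeff_mk]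
  -- step 1 : tsum to finite sum
  have hts : (∑' j : ℤ, if j * (3 * j - 2) = (n : ℤ) then (if Even j then (1 : ℤ) else -1) else 0)
      = ∑ j ∈ Finset.Icc (-(n:ℤ)-1) ((n:ℤ)+1),
          (if j * (3 * j - 2) = (n : ℤ) then sg j else 0) := by
    rw [tsum_eq_sum (s := Finset.Icc (-(n:ℤ)-1) ((n:ℤ)+1)) ?_]
    · apply Finset.sum_congr rfl
      intro j _
      rw [sg]
    · intro j hj
      simp only [Finset.mem_Icc, not_and_or, not_le] at hj
      rw [if_neg]
      rcases hj with hj | hj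
      · nlinarith
      · nlinarith
  rw [hts]
  -- step 2 : rewrite the product
  have hprod : (∏ k ∈ Finset.range (n+1), ((1 - (X : PowerSeries ℤ) ^ (6 * (k + 1) - 5)) *
        (1 - (X : PowerSeries ℤ) ^ (6 * (k + 1) - 1)) *
        (1 - (X : PowerSeries ℤ) ^ (6 * (k + 1)))))
      = (∑ j ∈ Finset.Icc (-((n+1:ℕ):ℤ)) ((n+1:ℕ):ℤ), trm (n+1) j) * Dq (n+1) := by
    rw [← main_finite (n+1), Dq, ← Finset.prod_mul_distrib]
    apply Finset.prod_congr rfl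
    intro k _
    rw [show 6*(k+1)-5 = 6*k+1 by omega, show 6*(k+1)-1 = 6*k+5 by omega,
        show 6*(k+1) = 6*k+6 by omega]
  rw [hprod, Finset.sum_mul, map_sum]
  apply Finset.sum_congr
  · congr 1 <;> push_cast <;> ring
  intro j hj
  simp only [Finset.mem_Icc] at hj
  have hj1 : -((n:ℤ)+1) ≤ j := by omega
  have hj2 : j ≤ (n:ℤ)+1 := by omega
  obtain ⟨h, hh⟩ := Dq_gbz (n+1) j (by push_cast; omega) (by push_cast; omega)
  have htrm : trm (n+1) j * Dq (n+1)
      = PowerSeries.C (sg j) * ((1 + X^(6*((n+1) - j.natAbs)+6) * h) * X ^ (j*(3*j-2)).toNat) := by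
    rw [trm, ← hh]
    ring
  rw [htrm, coeff_C_mul]
  have habs : j.natAbs ≤ n+1 := by
    rcases le_or_gt 0 j with h' | h' <;> omega
  have hbig : PowerSeries.coeff n (X^(6*((n+1) - j.natAbs)+6) * h * X ^ (j*(3*j-2)).toNat)
      = 0 := by
    rw [show X^(6*((n+1) - j.natAbs)+6) * h * X ^ (j*(3*j-2)).toNat
          = X^((6*((n+1) - j.natAbs)+6) + (j*(3*j-2)).toNat) * h by rw [pow_add]; ring]
    apply coeff_zero_of_big
    have he' : ((j*(3*j-2)).toNat : ℤ) = j*(3*j-2) := Int.toNat_of_nonneg (e_nonneg j)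
    have hcast : (((n+1) - j.natAbs : ℕ) : ℤ) = (n:ℤ)+1 - j.natAbs := by omega
    rcases le_or_gt 0 j with h' | h'
    · have : (j.natAbs : ℤ) = j := Int.natAbs_of_nonneg h'
      zify
      rw [he']
      nlinarith [sq_nonneg (3*j-4)]
    · have : (j.natAbs : ℤ) = -j := Int.ofNat_natAbs_of_nonpos (le_of_lt h')
      zify
      rw [he']
      nlinarith [sq_nonneg (3*j+4)]
  have hsplit : (1 + X^(6*((n+1) - j.natAbs)+6) * h) * X ^ (j*(3*j-2)).toNat
      = X ^ (j*(3*j-2)).toNat + X^(6*((n+1) - j.natAbs)+6) * h * X ^ (j*(3*j-2)).toNat := by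
    ring
  rw [hsplit, map_add, hbig, add_zero, coeff_X_pow]
  have he' : ((j*(3*j-2)).toNat : ℤ) = j*(3*j-2) := Int.toNat_of_nonneg (e_nonneg j)
  by_cases hc : j * (3*j-2) = (n:ℤ)
  · rw [if_pos hc, if_pos (show n = (j*(3*j-2)).toNat by
      have : ((j*(3*j-2)).toNat : ℤ) = (n:ℤ) := by rw [he', hc]
      exact_mod_cast this.symm), mul_one]
  · rw [if_neg hc, if_neg (show ¬ n = (j*(3*j-2)).toNat from fun hn => hc (by
      rw [← he', hn])), mul_zero]
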